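/- Let λ, y be reals with λ ≥ 0 and let q, ψ : [0,∞) → ℝ be differentiable functions with ψ(0)=0 satisfying ψ'(t) = -(y²+λ)ψ(t) + λ q(t) + q'(t). If q(0) = ψ(0) = 0, then ∫₀ᵀ q(t)(y²+2λ)ψ(t) dt = (1/2)(q(T)-ψ(T))² + ∫₀ᵀ [(y²+λ)ψ(t)² + λ q(t)²] dt ≥ 0. -/

import Mathlib

theorem dissipation_integral (lam y : ℝ) (hlam : 0 ≤ lam) (q ψ : ℝ → ℝ)
    (hq : Differentiable ℝ q) (hψ : Differentiable ℝ ψ)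
    (hψ0 : ψ 0 = 0) (hq0 : q 0 = 0)
    (hode : ∀ t, HasDerivAt ψ (-(y ^ 2 + lam) * ψ t + lam * q t + deriv q t) t) :
    ∀ T : ℝ, 0 ≤ T →
      (∫ t in (0:ℝ)..T, q t * (y ^ 2 + 2 * lam) * ψ t) =
        (1 / 2) * (q T - ψ T) ^ 2
          + ∫ t in (0:ℝ)..T, ((y ^ 2 + lam) * (ψ t) ^ 2 + lam * (q t) ^ 2) ∧
      0 ≤ ∫ t in (0:ℝ)..T, q t * (y ^ 2 + 2 * lam) * ψ t := by
  intro T hT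
  have hqc : Continuous q := hq.continuous
  have hψc : Continuous ψ := hψ.continuous
  have hc1 : Continuous fun t => q t * (y ^ 2 + 2 * lam) * ψ t := by continuity
  have hc2 : Continuous fun t => (y ^ 2 + lam) * (ψ t) ^ 2 + lam * (q t) ^ 2 := by
    continuity
  have hFderiv : ∀ t, HasDerivAt (fun t => (1 / 2) * (q t - ψ t) ^ 2)
      (q t * (y ^ 2 + 2 * lam) * ψ t -
        ((y ^ 2 + lam) * (ψ t) ^ 2 + lam * (q t) ^ 2)) t := by
    intro t
    have hu : HasDerivAt (fun t => q t - ψ t)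
        (deriv q t - (-(y ^ 2 + lam) * ψ t + lam * q t + deriv q t)) t :=
      (hq t).hasDerivAt.sub (hode t)
    have : HasDerivAt (fun t => (1 / 2 : ℝ) * (q t - ψ t) ^ 2)
        ((1 / 2 : ℝ) * (((2 : ℕ) : ℝ) * (q t - ψ t) ^ (2 - 1) *
          (deriv q t - (-(y ^ 2 + lam) * ψ t + lam * q t + deriv q t)))) t :=
      ((hu.pow 2).const_mul (1 / 2 : ℝ))
    convert this using 1
    ring
  have hint : (∫ t in (0:ℝ)..T,
      (q t * (y ^ 2 + 2 * lam) * ψ t -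
        ((y ^ 2 + lam) * (ψ t) ^ 2 + lam * (q t) ^ 2))) =
      (1 / 2) * (q T - ψ T) ^ 2 - (1 / 2) * (q 0 - ψ 0) ^ 2 :=
    intervalIntegral.integral_eq_sub_of_hasDerivAt (fun t _ => hFderiv t)
      ((hc1.sub hc2).intervalIntegrable 0 T)
  rw [intervalIntegral.integral_sub (hc1.intervalIntegrable 0 T)
      (hc2.intervalIntegrable 0 T)] at hint
  have heq : (∫ t in (0:ℝ)..T, q t * (y ^ 2 + 2 * lam) * ψ t) =
      (1 / 2) * (q T - ψ T) ^ 2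
        + ∫ t in (0:ℝ)..T, ((y ^ 2 + lam) * (ψ t) ^ 2 + lam * (q t) ^ 2) := by
    rw [hq0, hψ0] at hint
    linarith [hint]
  refine ⟨heq, ?_⟩
  rw [heq]
  have h1 : 0 ≤ (1 / 2) * (q T - ψ T) ^ 2 := by positivity
  have h2 : 0 ≤ ∫ t in (0:ℝ)..T, ((y ^ 2 + lam) * (ψ t) ^ 2 + lam * (q t) ^ 2) := by
    apply intervalIntegral.integral_nonneg hT
    intro t _
    have := sq_nonneg y
    positivity
  linarith
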